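/- If C₀C₁‖a‖_{W^{1,∞}(S)} ‖μ‖_{L^∞(Ω)} / min{ᾱ, κ} < 1, then the map A : G ↦ μ|σ_{ν_ε}(u_{ε,G})| on the cone 𝒞**_ε = {G ∈ L²(S_ε) : G ≥ 0 a.e.} is a contraction in L²(S_ε), and hence the regularized Coulomb friction problem admits a unique solution. -/

import Mathlib

open MeasureTheory ENNReal

noncomputable section

/-- The positivity cone `𝒞**_ε = {G ∈ L²(S_ε) : G ≥ 0 a.e.}`. -/
def posCone {γ : Type*} [MeasurableSpace γ] (μ : Measure γ) : Set (γ → ℝ) :=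
  {G | 0 ≤ᵐ[μ] G ∧ MemLp G 2 μ}

/-- If `C₀C₁‖a‖_{W^{1,∞}(S)}‖μ‖_{L^∞(Ω)} / min{ᾱ,κ} < 1`, then the map
`A : G ↦ μ |σ_{ν_ε}(u_{ε,G})|` on the cone `𝒞**_ε = {G ∈ L²(S_ε) : G ≥ 0}` is a contraction
in `L²(S_ε)`, and hence the regularized Coulomb friction problem admits a unique solution
(i.e. `A` has a unique fixed point, up to a.e. equality).

Here `(γ, μm)` is the crack `S_ε` with its surface measure, `σ G = σ_{ν_ε}(u_{ε,G})` is the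
normal-stress map satisfying the continuity estimate with constant
`C₀C₁‖a‖_{W^{1,∞}(S)}/min{ᾱ,κ}`, and `μf` is the friction coefficient, `0 ≤ μf ≤ Mμ` with
`Mμ = ‖μ‖_{L^∞(Ω)}`. -/
theorem statement14
    {γ : Type*} [MeasurableSpace γ] (μm : Measure γ)
    (σ : (γ → ℝ) → (γ → ℝ))
    (μf : γ → ℝ) (hμfm : Measurable μf)
    (C₀ C₁ Anorm ᾱ κ Mμ : ℝ)
    (hC₀ : 0 < C₀) (hC₁ : 0 < C₁) (hA : 0 < Anorm) (hᾱ : 0 < ᾱ) (hκ : 0 < κ) (hMμ : 0 ≤ Mμ)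
    (hμf : ∀ x, 0 ≤ μf x ∧ μf x ≤ Mμ)
    (hσmeas : ∀ G ∈ posCone μm, AEStronglyMeasurable (σ G) μm)
    (hσ0 : MemLp (σ 0) 2 μm)
    -- continuity of the solution map with respect to the given friction
    (hσlip : ∀ G₁ ∈ posCone μm, ∀ G₂ ∈ posCone μm,
      eLpNorm (σ G₁ - σ G₂) 2 μm
        ≤ ENNReal.ofReal (C₀ * C₁ * Anorm / min ᾱ κ) * eLpNorm (G₁ - G₂) 2 μm)
    -- the contraction condition
    (hcond : C₀ * C₁ * Anorm * Mμ / min ᾱ κ < 1) :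
    -- `A : G ↦ μf |σ G|` is a contraction on the cone ...
    (∀ G₁ ∈ posCone μm, ∀ G₂ ∈ posCone μm,
      eLpNorm ((fun x => μf x * |σ G₁ x|) - fun x => μf x * |σ G₂ x|) 2 μm
        ≤ ENNReal.ofReal (C₀ * C₁ * Anorm * Mμ / min ᾱ κ) * eLpNorm (G₁ - G₂) 2 μm) ∧
    -- ... and hence it admits a unique fixed point in the cone (up to a.e. equality)
    (∃ G ∈ posCone μm, (fun x => μf x * |σ G x|) =ᵐ[μm] G ∧
      ∀ G' ∈ posCone μm, (fun x => μf x * |σ G' x|) =ᵐ[μm] G' → G' =ᵐ[μm] G) := by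
  haveI : Fact ((1 : ℝ≥0∞) ≤ 2) := ⟨one_le_two⟩
  set L : ℝ := C₀ * C₁ * Anorm / min ᾱ κ with hLdef
  set k : ℝ := C₀ * C₁ * Anorm * Mμ / min ᾱ κ with hkdef
  have hk0 : 0 ≤ k := by
    apply div_nonneg (by positivity) (le_of_lt (lt_min hᾱ hκ))
  have hkLM : k = Mμ * L := by rw [hkdef, hLdef]; ring
  -- the map A
  set A : (γ → ℝ) → (γ → ℝ) := fun G x => μf x * |σ G x| with hAdef
  -- key contraction estimate
  have key : ∀ G₁ ∈ posCone μm, ∀ G₂ ∈ posCone μm,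
      eLpNorm (A G₁ - A G₂) 2 μm ≤ ENNReal.ofReal k * eLpNorm (G₁ - G₂) 2 μm := by
    intro G₁ hG₁ G₂ hG₂
    have hpt : ∀ x, ‖(A G₁ - A G₂) x‖ ≤ ‖(Mμ • (σ G₁ - σ G₂)) x‖ := by
      intro x
      simp only [Pi.sub_apply, Pi.smul_apply, smul_eq_mul, hAdef, Real.norm_eq_abs]
      rw [← mul_sub, abs_mul, abs_mul]
      rw [abs_of_nonneg (hμf x).1, abs_of_nonneg hMμ]
      exact mul_le_mul (hμf x).2 (abs_abs_sub_abs_le_abs_sub _ _) (abs_nonneg _) hMμ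
    calc eLpNorm (A G₁ - A G₂) 2 μm
        ≤ eLpNorm (Mμ • (σ G₁ - σ G₂)) 2 μm := eLpNorm_mono hpt
      _ = ‖Mμ‖₊ * eLpNorm (σ G₁ - σ G₂) 2 μm := by
          rw [eLpNorm_const_smul, enorm_eq_nnnorm]
      _ ≤ ‖Mμ‖₊ * (ENNReal.ofReal L * eLpNorm (G₁ - G₂) 2 μm) :=
          mul_le_mul_right (hσlip G₁ hG₁ G₂ hG₂) _
      _ = ENNReal.ofReal k * eLpNorm (G₁ - G₂) 2 μm := by
          rw [← mul_assoc, ← enorm_eq_nnnorm, Real.enorm_eq_ofReal hMμ, ← ENNReal.ofReal_mul hMμ, ← hkLM]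
  have h0cone : (0 : γ → ℝ) ∈ posCone μm :=
    ⟨Filter.Eventually.of_forall fun _ => le_rfl, MemLp.zero⟩
  -- A maps the cone into the cone
  have hAmem : ∀ G ∈ posCone μm, A G ∈ posCone μm := by
    intro G hG
    have hσGm : AEStronglyMeasurable (σ G) μm := hσmeas G hG
    have hσGsub : MemLp (σ G - σ 0) 2 μm := by
      refine ⟨hσGm.sub hσ0.aestronglyMeasurable, ?_⟩
      calc eLpNorm (σ G - σ 0) 2 μm
          ≤ ENNReal.ofReal L * eLpNorm (G - 0) 2 μm := hσlip G hG 0 h0cone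
        _ < ⊤ := by
            rw [sub_zero]
            exact ENNReal.mul_lt_top ENNReal.ofReal_lt_top hG.2.2
    have hσGmem : MemLp (σ G) 2 μm := by
      have := hσGsub.add hσ0
      simpa using this
    have hAGm : AEStronglyMeasurable (A G) μm := by
      have : AEStronglyMeasurable (fun x => μf x * ‖σ G x‖) μm :=
        hμfm.aestronglyMeasurable.mul hσGm.norm
      simpa [hAdef, Real.norm_eq_abs] using this
    refine ⟨Filter.Eventually.of_forall fun x => mul_nonneg (hμf x).1 (abs_nonneg _), ?_⟩
    refine hσGmem.of_le_mul (c := Mμ) hAGm (Filter.Eventually.of_forall fun x => ?_)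
    simp only [hAdef, Real.norm_eq_abs, abs_mul, abs_abs]
    exact mul_le_mul_of_nonneg_right
      (by rw [abs_of_nonneg (hμf x).1]; exact (hμf x).2) (abs_nonneg _)
  refine ⟨key, ?_⟩
  -- set up the fixed-point argument in `Lp`
  set P : (γ → ℝ) → (γ → ℝ) := fun f x => max (f x) 0 with hPdef
  have hPcone : ∀ f : Lp ℝ 2 μm, P f ∈ posCone μm := by
    intro f
    refine ⟨Filter.Eventually.of_forall fun x => le_max_right _ _, ?_⟩
    refine (Lp.memLp f).of_le ((Lp.aestronglyMeasurable f).sup aestronglyMeasurable_const)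
      (Filter.Eventually.of_forall fun x => ?_)
    simp only [hPdef, Real.norm_eq_abs]
    simpa using abs_max_sub_max_le_abs (f x) 0 0
  set F : Lp ℝ 2 μm → Lp ℝ 2 μm := fun f => ((hAmem (P f) (hPcone f)).2).toLp (A (P f))
    with hFdef
  have hFcoe : ∀ f : Lp ℝ 2 μm, (F f : γ → ℝ) =ᵐ[μm] A (P f) := fun f =>
    MemLp.coeFn_toLp _
  have hofk : (ENNReal.ofReal k) = (k.toNNReal : ℝ≥0∞) := rfl
  have hlip : LipschitzWith (Real.toNNReal k) F := by
    intro f g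
    rw [Lp.edist_def, Lp.edist_def]
    calc eLpNorm ((F f : γ → ℝ) - (F g : γ → ℝ)) 2 μm
        = eLpNorm (A (P (f : γ → ℝ)) - A (P (g : γ → ℝ))) 2 μm :=
          eLpNorm_congr_ae ((hFcoe f).sub (hFcoe g))
      _ ≤ ENNReal.ofReal k * eLpNorm (P (f : γ → ℝ) - P (g : γ → ℝ)) 2 μm :=
          key _ (hPcone f) _ (hPcone g)
      _ ≤ ENNReal.ofReal k * eLpNorm ((f : γ → ℝ) - (g : γ → ℝ)) 2 μm := by
          refine mul_le_mul_right (eLpNorm_mono fun x => ?_) _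
          simp only [Pi.sub_apply, hPdef, Real.norm_eq_abs]
          exact abs_max_sub_max_le_abs _ _ _
      _ = (Real.toNNReal k : ℝ≥0∞) * eLpNorm ((f : γ → ℝ) - (g : γ → ℝ)) 2 μm := by
          rw [hofk]
  have hcontr : ContractingWith (Real.toNNReal k) F := by
    refine ⟨?_, hlip⟩
    rw [← NNReal.coe_lt_coe, Real.coe_toNNReal k hk0, NNReal.coe_one]
    exact hcond
  haveI : Nonempty (Lp ℝ 2 μm) := ⟨0⟩
  set fstar : Lp ℝ 2 μm := hcontr.fixedPoint F with hfstardef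
  have hfix : F fstar = fstar := hcontr.fixedPoint_isFixedPt
  set G : γ → ℝ := P fstar with hGdef
  have hGcone : G ∈ posCone μm := hPcone fstar
  -- fstar ≥ 0 a.e. since it agrees a.e. with A (P fstar), which is nonneg
  have hfeq : (fstar : γ → ℝ) =ᵐ[μm] A G := by
    have := hFcoe fstar
    rw [hfix] at this
    exact this
  have hfnn : 0 ≤ᵐ[μm] (fstar : γ → ℝ) := by
    filter_upwards [hfeq] with x hx
    rw [hx]
    exact mul_nonneg (hμf x).1 (abs_nonneg _)
  have hGf : G =ᵐ[μm] (fstar : γ → ℝ) := by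
    filter_upwards [hfnn] with x hx
    simp only [hGdef, hPdef]
    exact max_eq_left hx
  have hGfix : A G =ᵐ[μm] G := hfeq.symm.trans hGf.symm
  refine ⟨G, hGcone, hGfix, ?_⟩
  -- uniqueness
  intro G' hG' hG'fix
  have hsub : (G' - G) =ᵐ[μm] (A G' - A G) := hG'fix.symm.sub hGfix.symm
  have hd : eLpNorm (G' - G) 2 μm ≤ ENNReal.ofReal k * eLpNorm (G' - G) 2 μm := by
    calc eLpNorm (G' - G) 2 μm = eLpNorm (A G' - A G) 2 μm := eLpNorm_congr_ae hsub
      _ ≤ ENNReal.ofReal k * eLpNorm (G' - G) 2 μm := key G' hG' G hGcone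
  have hdlt : eLpNorm (G' - G) 2 μm < ⊤ := (hG'.2.sub hGcone.2).2
  have hzero : eLpNorm (G' - G) 2 μm = 0 := by
    by_contra h0
    have : ENNReal.ofReal k * eLpNorm (G' - G) 2 μm < 1 * eLpNorm (G' - G) 2 μm := by
      refine ENNReal.mul_lt_mul_left h0 hdlt.ne ?_
      rw [ENNReal.ofReal_lt_one]
      exact hcond
    rw [one_mul] at this
    exact absurd (lt_of_le_of_lt hd this) (lt_irrefl _)
  have : (G' - G) =ᵐ[μm] 0 := by
    rw [← eLpNorm_eq_zero_iff (hG'.2.aestronglyMeasurable.sub hGcone.2.aestronglyMeasurable)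
      two_ne_zero]
    exact hzero
  filter_upwards [this] with x hx
  have : G' x - G x = 0 := hx
  linarith
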